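/- Let (P, dist) be a finite metric space whose doubling dimension is at most d, i.e., for every p ∈ P and every real R > 0 the ball ball_P(p,R) can be covered by at most 2^d balls in P of radius R/2 centered at points of P. Let S be a subset of P of size n, let μ ≥ 1 be a real number, and set c = 2(8μ)^d; assume n ≥ c + 1. For p ∈ S, let R_p = min{r > 0 : |ball_S(p,r)| ≥ n/c}, and call p good if |ball_S(p, μ·R_p)| ≤ n/2. Then the number of good points in S is at least n/c; equivalently, a uniformly random point of S is good with probability at least 1/c. -/

import Mathlib

open Metric Finset

private lemma iter_cover {P : Type*} [MetricSpace P] [Fintype P]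
    (d : ℝ)
    (hdoub : ∀ (p : P) (R : ℝ), 0 < R → ∃ C : Finset P,
      (C.card : ℝ) ≤ (2 : ℝ) ^ d ∧
      Metric.closedBall p R ⊆ ⋃ c ∈ C, Metric.closedBall c (R / 2)) :
    ∀ (k : ℕ) (p : P) (R : ℝ), 0 < R → ∃ C : Finset P,
      (C.card : ℝ) ≤ ((2 : ℝ) ^ d) ^ k ∧
      Metric.closedBall p R ⊆ ⋃ c ∈ C, Metric.closedBall c (R / 2 ^ k) := by
  classical
  intro k
  induction k with
  | zero =>
    intro p R hR
    exact ⟨{p}, by simp, by simp⟩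
  | succ k ih =>
    intro p R hR
    obtain ⟨C, hCcard, hCcov⟩ := ih p R hR
    have hR2 : 0 < R / 2 ^ k := by positivity
    choose f hf1 hf2 using fun c : P => hdoub c (R / 2 ^ k) hR2
    refine ⟨C.biUnion f, ?_, ?_⟩
    · calc ((C.biUnion f).card : ℝ) ≤ ((∑ c ∈ C, (f c).card : ℕ) : ℝ) := by
            exact_mod_cast Finset.card_biUnion_le
        _ = ∑ c ∈ C, ((f c).card : ℝ) := by push_cast; ring
        _ ≤ ∑ c ∈ C, (2:ℝ)^d := Finset.sum_le_sum fun c _ => hf1 c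
        _ = (C.card : ℝ) * (2:ℝ)^d := by rw [Finset.sum_const, nsmul_eq_mul]
        _ ≤ ((2:ℝ)^d)^k * (2:ℝ)^d := by
            have h2d : (0:ℝ) ≤ (2:ℝ)^d := le_of_lt (Real.rpow_pos_of_pos (by norm_num) d)
            exact mul_le_mul_of_nonneg_right hCcard h2d
        _ = ((2:ℝ)^d)^(k+1) := by rw [pow_succ]
    · intro x hx
      have := hCcov hx
      simp only [Set.mem_iUnion] at this
      obtain ⟨c0, hc0, hxc0⟩ := this
      have := hf2 c0 hxc0
      simp only [Set.mem_iUnion] at this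
      obtain ⟨c1, hc1, hxc1⟩ := this
      simp only [Set.mem_iUnion]
      refine ⟨c1, Finset.mem_biUnion.2 ⟨c0, hc0, hc1⟩, ?_⟩
      have : R / 2 ^ k / 2 = R / 2 ^ (k+1) := by ring
      rwa [this] at hxc1

/-- Let `(P, dist)` be a finite metric space of doubling dimension at most `d`,
let `S ⊆ P` have `n` points, let `μ ≥ 1`, `c = 2 (8μ)^d`, and `n ≥ c + 1`.
For `p ∈ S`, let `R_p` be the least `r > 0` with `|ball_S(p, r)| ≥ n / c`, and
call `p` good if `|ball_S(p, μ R_p)| ≤ n / 2`. Then the number of good points of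
`S` is at least `n / c` (so a uniformly random point of `S` is good with
probability at least `1 / c`). -/
theorem many_good_points {P : Type*} [MetricSpace P] [Fintype P]
    (d : ℝ) (hd : 1 ≤ d)
    (hdoub : ∀ (p : P) (R : ℝ), 0 < R → ∃ C : Finset P,
      (C.card : ℝ) ≤ (2 : ℝ) ^ d ∧
      Metric.closedBall p R ⊆ ⋃ c ∈ C, Metric.closedBall c (R / 2))
    (S : Finset P) (n : ℕ) (hn : S.card = n)
    (μ : ℝ) (hμ : 1 ≤ μ)
    (c : ℝ) (hc : c = 2 * (8 * μ) ^ d)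
    (hnc : c + 1 ≤ (n : ℝ))
    (Rp : P → ℝ)
    (hRp : ∀ p ∈ S, IsLeast {r : ℝ | 0 < r ∧
      (n : ℝ) / c ≤ ((S.filter fun x => dist p x ≤ r).card : ℝ)} (Rp p)) :
    (n : ℝ) / c ≤
      ((S.filter fun p =>
        ((S.filter fun x => dist p x ≤ μ * Rp p).card : ℝ) ≤ (n : ℝ) / 2).card : ℝ) := by
  classical
  have hμ0 : (0:ℝ) < μ := lt_of_lt_of_le one_pos hμ
  have h8μ : (0:ℝ) < 8 * μ := by linarith
  have h8μd : (0:ℝ) < (8*μ:ℝ) ^ d := Real.rpow_pos_of_pos h8μ d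
  have hc0 : (0:ℝ) < c := by rw [hc]; linarith
  have hd0 : (0:ℝ) ≤ d := by linarith
  have hnpos : (0:ℝ) < (n:ℝ) := by linarith
  have hS : S.Nonempty := by
    rw [← Finset.card_pos, hn]
    exact_mod_cast hnpos
  obtain ⟨p0, hp0S, hp0min⟩ := S.exists_min_image Rp hS
  obtain ⟨⟨hr0, hrcount⟩, -⟩ := hRp p0 hp0S
  set r := Rp p0 with hrdef
  -- choose k with 4μ < 2^k ≤ 8μ
  have hex : ∃ k : ℕ, (4*μ:ℝ) < 2 ^ k := pow_unbounded_of_one_lt _ one_lt_two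
  set k := Nat.find hex with hkdef
  have hk4 : (4*μ:ℝ) < 2 ^ k := Nat.find_spec hex
  have hk8 : ((2:ℝ) ^ k) ≤ 8 * μ := by
    rcases Nat.eq_zero_or_pos k with hk0 | hkpos
    · rw [hk0] at hk4; simp at hk4; linarith
    · obtain ⟨m, hm⟩ := Nat.exists_eq_succ_of_ne_zero (Nat.pos_iff_ne_zero.1 hkpos)
      have hmlt : m < k := by omega
      have hm4 : (2:ℝ)^m ≤ 4*μ := not_lt.1 (Nat.find_min hex hmlt)
      have hkeq : (2:ℝ)^k = 2 * 2^m := by rw [hm, pow_succ]; ring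
      rw [hkeq]; linarith
  -- the main claim: every point within r of p0 is good
  have hgood : ∀ q ∈ S, dist p0 q ≤ r →
      ((S.filter fun x => dist q x ≤ μ * Rp q).card : ℝ) ≤ (n:ℝ) / 2 := by
    intro q hqS hqr
    -- Rp q ≤ 2r
    have hRq : Rp q ≤ 2 * r := by
      apply (hRp q hqS).2
      constructor
      · linarith
      · refine le_trans hrcount ?_
        have hsub1 : S.filter (fun x => dist p0 x ≤ r) ⊆ S.filter (fun x => dist q x ≤ 2*r) :=
          Finset.monotone_filter_right S (fun x _ hx => by
            calc dist q x ≤ dist q p0 + dist p0 x := dist_triangle _ _ _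
              _ ≤ r + r := add_le_add (by rw [dist_comm]; exact hqr) hx
              _ = 2 * r := by ring)
        exact_mod_cast Finset.card_le_card hsub1
    -- cover
    have hRpos : (0:ℝ) < 2 * μ * r := by positivity
    obtain ⟨C, hCcard, hCcov⟩ := iter_cover d hdoub k q (2 * μ * r) hRpos
    set ρ : ℝ := 2 * μ * r / 2 ^ k with hρdef
    have hρ0 : 0 < ρ := by positivity
    have h2ρr : 2 * ρ < r := by
      have h2k : (0:ℝ) < 2 ^ k := by positivity
      rw [show 2 * ρ = (4*μ) * r / 2^k from by rw [hρdef]; ring, div_lt_iff₀ h2k]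
      nlinarith
    -- each small ball has < n/c points of S
    have hball : ∀ c0 ∈ C, ((S.filter fun x => dist c0 x ≤ ρ).card : ℝ) ≤ (n:ℝ) / c := by
      intro c0 _
      by_cases hne : (S.filter fun x => dist c0 x ≤ ρ).Nonempty
      · obtain ⟨s, hs⟩ := hne
        rw [Finset.mem_filter] at hs
        obtain ⟨hsS, hsd⟩ := hs
        have hsub2 : S.filter (fun x => dist c0 x ≤ ρ) ⊆ S.filter (fun x => dist s x ≤ 2*ρ) :=
          Finset.monotone_filter_right S (fun x _ hx => by
            calc dist s x ≤ dist s c0 + dist c0 x := dist_triangle _ _ _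
              _ ≤ ρ + ρ := add_le_add (by rw [dist_comm]; exact hsd) hx
              _ = 2*ρ := by ring)
        have hlt : ¬ ((n:ℝ)/c ≤ ((S.filter fun x => dist s x ≤ 2*ρ).card : ℝ)) := by
          intro hcontra
          have h1 : Rp s ≤ 2*ρ := (hRp s hsS).2 ⟨by positivity, hcontra⟩
          have h2 : r ≤ Rp s := hp0min s hsS
          linarith
        calc ((S.filter fun x => dist c0 x ≤ ρ).card : ℝ)
            ≤ ((S.filter fun x => dist s x ≤ 2*ρ).card : ℝ) := by
              exact_mod_cast Finset.card_le_card hsub2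
          _ ≤ (n:ℝ)/c := le_of_lt (lt_of_not_ge hlt)
      · rw [Finset.not_nonempty_iff_eq_empty] at hne
        rw [hne]
        simp
        positivity
    -- the big ball is covered
    have hmain : S.filter (fun x => dist q x ≤ μ * Rp q) ⊆
        C.biUnion (fun c0 => S.filter fun x => dist c0 x ≤ ρ) := by
      intro x hx
      rw [Finset.mem_filter] at hx
      have hx' : x ∈ Metric.closedBall q (2*μ*r) := by
        rw [Metric.mem_closedBall, dist_comm]
        calc dist q x ≤ μ * Rp q := hx.2
          _ ≤ 2*μ*r := by nlinarith
      have := hCcov hx'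
      simp only [Set.mem_iUnion, Metric.mem_closedBall] at this
      obtain ⟨c0, hc0, hdx⟩ := this
      rw [Finset.mem_biUnion]
      exact ⟨c0, hc0, Finset.mem_filter.2 ⟨hx.1, by rw [dist_comm]; exact hdx⟩⟩
    -- card bound on the cover
    have hCc2 : (C.card : ℝ) ≤ c / 2 := by
      have heq : ((2:ℝ)^d)^k = ((2:ℝ)^(k:ℕ) : ℝ) ^ d := by
        rw [← Real.rpow_natCast ((2:ℝ)^d) k, ← Real.rpow_natCast (2:ℝ) k,
          ← Real.rpow_mul (by norm_num : (0:ℝ) ≤ 2),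
          ← Real.rpow_mul (by norm_num : (0:ℝ) ≤ 2), mul_comm]
      have h2 : ((2:ℝ)^(k:ℕ) : ℝ) ^ d ≤ (8*μ:ℝ) ^ d :=
        Real.rpow_le_rpow (by positivity) hk8 hd0
      rw [hc]
      calc (C.card : ℝ) ≤ ((2:ℝ)^d)^k := hCcard
        _ = ((2:ℝ)^(k:ℕ) : ℝ) ^ d := heq
        _ ≤ (8*μ:ℝ) ^ d := h2
        _ = 2 * (8*μ:ℝ)^d / 2 := by ring
    calc ((S.filter fun x => dist q x ≤ μ * Rp q).card : ℝ)
        ≤ ((C.biUnion (fun c0 => S.filter fun x => dist c0 x ≤ ρ)).card : ℝ) := by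
          exact_mod_cast Finset.card_le_card hmain
      _ ≤ ((∑ c0 ∈ C, (S.filter fun x => dist c0 x ≤ ρ).card : ℕ) : ℝ) := by
          exact_mod_cast Finset.card_biUnion_le
      _ = ∑ c0 ∈ C, ((S.filter fun x => dist c0 x ≤ ρ).card : ℝ) := by push_cast; ring
      _ ≤ ∑ c0 ∈ C, (n:ℝ)/c := Finset.sum_le_sum hball
      _ = (C.card : ℝ) * ((n:ℝ)/c) := by rw [Finset.sum_const, nsmul_eq_mul]
      _ ≤ (c/2) * ((n:ℝ)/c) := mul_le_mul_of_nonneg_right hCc2 (by positivity)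
      _ = (n:ℝ)/2 := by field_simp
  -- conclude
  have hsub : S.filter (fun x => dist p0 x ≤ r) ⊆
      S.filter (fun p => ((S.filter fun x => dist p x ≤ μ * Rp p).card : ℝ) ≤ (n:ℝ)/2) := by
    intro q hq
    rw [Finset.mem_filter] at hq ⊢
    exact ⟨hq.1, hgood q hq.1 hq.2⟩
  calc (n:ℝ)/c ≤ ((S.filter fun x => dist p0 x ≤ r).card : ℝ) := hrcount
    _ ≤ _ := by exact_mod_cast Finset.card_le_card hsub
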